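/- In the I-GMANOVA setup, let R̂₀ = K⁻¹(S_c + S_c^{1/2} P_{A₀}^⊥ Z_{W1} P_{C†} Z_{W1}† P_{A₀}^⊥ S_c^{1/2}), which is Hermitian positive definite, and define Z_{d,0} = Z − S_c^{1/2} P_{A₀} S_c^{-1/2} Z P_{C†}. Then R̂₀⁻¹ Z_{d,0} P_{C†} = S_c^{-1/2} P_{A₀}^⊥ S_c^{1/2} R̂₀⁻¹ Z P_{C†}. -/

import Mathlib

open Matrix
open scoped ComplexOrder

noncomputable section

/-- Orthogonal projector onto the column space of `F`: `P_F = F (Fᴴ F)⁻¹ Fᴴ`. -/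
def proj {n m : Type*} [Fintype n] [Fintype m] [DecidableEq n] [DecidableEq m]
    (F : Matrix n m ℂ) : Matrix n n ℂ :=
  F * (Fᴴ * F)⁻¹ * Fᴴ

/-- Complementary projector `P_F^⊥ = I - P_F`. -/
def projPerp {n m : Type*} [Fintype n] [Fintype m] [DecidableEq n] [DecidableEq m]
    (F : Matrix n m ℂ) : Matrix n n ℂ :=
  1 - proj F

/-- The square root of a positive semidefinite matrix, as defined in the older Mathlib
(removed since): `U * diagonal (√ eigenvalues) * Uᴴ`. -/
def Matrix.PosSemidef.sqrt {n 𝕜 : Type*} [Fintype n] [DecidableEq n] [RCLike 𝕜]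
    {A : Matrix n n 𝕜} (hA : A.PosSemidef) : Matrix n n 𝕜 :=
  (hA.1.eigenvectorUnitary : Matrix n n 𝕜) *
    diagonal (fun i => ((Real.sqrt (hA.1.eigenvalues i) : ℝ) : 𝕜)) *
    (star hA.1.eigenvectorUnitary : Matrix n n 𝕜)

lemma Matrix.PosSemidef.posSemidef_sqrt {n 𝕜 : Type*} [Fintype n] [DecidableEq n] [RCLike 𝕜]
    {A : Matrix n n 𝕜} (hA : A.PosSemidef) : hA.sqrt.PosSemidef := by
  unfold Matrix.PosSemidef.sqrt
  have hD : (diagonal (fun i => ((Real.sqrt (hA.1.eigenvalues i) : ℝ) : 𝕜))).PosSemidef :=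
    Matrix.PosSemidef.diagonal (fun i => by
      simp only [Pi.zero_apply]
      exact_mod_cast Real.sqrt_nonneg _)
  have := hD.mul_mul_conjTranspose_same (hA.1.eigenvectorUnitary : Matrix n n 𝕜)
  simpa [Unitary.coe_star, Matrix.star_eq_conjTranspose] using this

lemma Matrix.PosSemidef.sqrt_mul_self {n 𝕜 : Type*} [Fintype n] [DecidableEq n] [RCLike 𝕜]
    {A : Matrix n n 𝕜} (hA : A.PosSemidef) : hA.sqrt * hA.sqrt = A := by
  unfold Matrix.PosSemidef.sqrt
  have hU : (star hA.1.eigenvectorUnitary : Matrix n n 𝕜) * (hA.1.eigenvectorUnitary : Matrix n n 𝕜)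
      = 1 := Unitary.coe_star_mul_self _
  have hDD : diagonal (fun i => ((Real.sqrt (hA.1.eigenvalues i) : ℝ) : 𝕜)) *
      diagonal (fun i => ((Real.sqrt (hA.1.eigenvalues i) : ℝ) : 𝕜)) =
      diagonal (RCLike.ofReal ∘ hA.1.eigenvalues) := by
    rw [diagonal_mul_diagonal]
    congr 1
    funext i
    simp only [Function.comp_apply]
    rw [← RCLike.ofReal_mul, Real.mul_self_sqrt (hA.eigenvalues_nonneg i)]
  calc _ = (hA.1.eigenvectorUnitary : Matrix n n 𝕜) *
        (diagonal (fun i => ((Real.sqrt (hA.1.eigenvalues i) : ℝ) : 𝕜)) *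
        ((star hA.1.eigenvectorUnitary : Matrix n n 𝕜) * (hA.1.eigenvectorUnitary : Matrix n n 𝕜)) *
        diagonal (fun i => ((Real.sqrt (hA.1.eigenvalues i) : ℝ) : 𝕜))) *
        (star hA.1.eigenvectorUnitary : Matrix n n 𝕜) := by simp only [Matrix.mul_assoc]
    _ = A := by
      rw [hU, Matrix.mul_one, hDD]
      conv_rhs => rw [hA.1.spectral_theorem]
      simp [Unitary.conjStarAlgAut_apply]


lemma posDef_ofReal_smul {n : Type*} [Fintype n] [DecidableEq n] {A : Matrix n n ℂ}
    (hA : A.PosDef) {c : ℝ} (hc : 0 < c) : ((c : ℂ) • A).PosDef := by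
  refine Matrix.PosDef.of_dotProduct_mulVec_pos ?_ fun x hx => ?_
  · rw [Matrix.IsHermitian, conjTranspose_smul, hA.1.eq]
    norm_num
  · rw [smul_mulVec, dotProduct_smul, smul_eq_mul]
    exact mul_pos (by exact_mod_cast hc) (hA.dotProduct_mulVec_pos hx)

lemma posDef_conj_herm {n : Type*} [Fintype n] [DecidableEq n] {A S : Matrix n n ℂ}
    (hA : A.PosDef) (hSH : Sᴴ = S) (hS : IsUnit S.det) : (S * A * S).PosDef := by
  refine Matrix.PosDef.of_dotProduct_mulVec_pos ?_ fun x hx => ?_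
  · rw [Matrix.IsHermitian, conjTranspose_mul, conjTranspose_mul, hSH, hA.1.eq, Matrix.mul_assoc]
  · have h1 : (S * A * S) *ᵥ x = S *ᵥ (A *ᵥ (S *ᵥ x)) := by
      rw [mulVec_mulVec, mulVec_mulVec]
    rw [h1, dotProduct_mulVec]
    have h2 : star x ᵥ* S = star (S *ᵥ x) := by rw [star_mulVec, hSH]
    rw [h2]
    refine hA.dotProduct_mulVec_pos (x := S *ᵥ x) fun h => hx ?_
    have hinj := Matrix.mulVec_injective_iff_isUnit.mpr ((Matrix.isUnit_iff_isUnit_det S).mpr hS)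
    exact hinj (by rw [h, mulVec_zero])

lemma emb_mul_conjTranspose {a b : ℕ} (hab : a ≤ b) :
    (Matrix.of fun (i : Fin a) (j : Fin b) => if (i:ℕ)=(j:ℕ) then (1:ℂ) else 0) *
      (Matrix.of fun (i : Fin a) (j : Fin b) => if (i:ℕ)=(j:ℕ) then (1:ℂ) else 0)ᴴ = 1 := by
  ext i j
  simp only [Matrix.mul_apply, Matrix.conjTranspose_apply, Matrix.of_apply, Matrix.one_apply,
    apply_ite (star : ℂ → ℂ), star_one, star_zero]
  rw [Finset.sum_eq_single (⟨(i:ℕ), lt_of_lt_of_le i.2 hab⟩ : Fin b)]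
  · by_cases h : i = j
    · subst h; simp
    · have : ¬ (i:ℕ) = (j:ℕ) := fun h' => h (Fin.ext h')
      have h2 : ¬ (j:ℕ) = (i:ℕ) := fun h' => this h'.symm
      simp [this, h2, h]
  · intro k _ hk
    have : ¬ (i:ℕ) = (k:ℕ) := fun h' => hk (by ext; simp [← h'])
    simp [this]
  · intro h; exact absurd (Finset.mem_univ _) h

lemma emb_mulVec_eq_zero {a b : ℕ} (hab : a ≤ b) {x : Fin a → ℂ}
    (h : (Matrix.of fun (i : Fin b) (j : Fin a) => if (i:ℕ)=(j:ℕ) then (1:ℂ) else 0) *ᵥ x = 0) :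
    x = 0 := by
  funext j
  have hj := congrFun h ⟨(j:ℕ), lt_of_lt_of_le j.2 hab⟩
  simp only [Matrix.mulVec, dotProduct, Matrix.of_apply, Pi.zero_apply] at hj
  rw [Finset.sum_eq_single j] at hj
  · simpa using hj
  · intro k _ hk
    have : ¬ (j:ℕ) = (k:ℕ) := fun h' => hk (Fin.ext h'.symm)
    simp [this]
  · intro h; exact absurd (Finset.mem_univ _) h

/-- Eq. (G.1) of the paper: `R̂₀⁻¹ Z_{d,0} P_{Cᴴ} = S_c^{-1/2} P_{A₀}^⊥ S_c^{1/2} R̂₀⁻¹ Z P_{Cᴴ}`,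
where `R̂₀` is Hermitian positive definite. -/
theorem gradient_compact_form_identity
    (N K M t r : ℕ) (hN : 0 < N) (hK : 0 < K) (hM : 0 < M) (ht : 0 < t) (hr : 0 < r)
    (hJ : t + r ≤ N) (hMK : M ≤ K)
    (Sc : Matrix (Fin N) (Fin N) ℂ) (hS : Sc.PosDef)
    (Z : Matrix (Fin N) (Fin K) ℂ) :
    let Et : Matrix (Fin N) (Fin t) ℂ := Matrix.of fun i j => if (i : ℕ) = (j : ℕ) then 1 else 0
    let C : Matrix (Fin M) (Fin K) ℂ := Matrix.of fun i j => if (i : ℕ) = (j : ℕ) then 1 else 0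
    let PC : Matrix (Fin K) (Fin K) ℂ := Cᴴ * (C * Cᴴ)⁻¹ * C
    let Shalf : Matrix (Fin N) (Fin N) ℂ := hS.posSemidef.sqrt
    let ZW1 : Matrix (Fin N) (Fin K) ℂ := Shalf⁻¹ * Z
    let A0 : Matrix (Fin N) (Fin t) ℂ := Shalf⁻¹ * Et
    let R0 : Matrix (Fin N) (Fin N) ℂ :=
      ((K : ℂ))⁻¹ • (Sc + Shalf * projPerp A0 * ZW1 * PC * ZW1ᴴ * projPerp A0 * Shalf)
    let Zd0 : Matrix (Fin N) (Fin K) ℂ := Z - Shalf * proj A0 * Shalf⁻¹ * Z * PC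
    R0.PosDef ∧
      R0⁻¹ * Zd0 * PC = Shalf⁻¹ * projPerp A0 * Shalf * R0⁻¹ * Z * PC := by
  intro Et C PC Shalf ZW1 A0 R0 Zd0
  have htN : t ≤ N := le_trans (Nat.le_add_right t r) hJ
  have hEtdef : Et = Matrix.of fun (i : Fin N) (j : Fin t) =>
      if (i:ℕ) = (j:ℕ) then (1:ℂ) else 0 := rfl
  have hZW1def : ZW1 = Shalf⁻¹ * Z := rfl
  have hA0def : A0 = Shalf⁻¹ * Et := rfl
  have hR0def : R0 =
      ((K : ℂ))⁻¹ • (Sc + Shalf * projPerp A0 * ZW1 * PC * ZW1ᴴ * projPerp A0 * Shalf) := rfl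
  have hZd0def : Zd0 = Z - Shalf * proj A0 * Shalf⁻¹ * Z * PC := rfl
  have hSqrtPsd : Shalf.PosSemidef := hS.posSemidef.posSemidef_sqrt
  have hSS : Shalf * Shalf = Sc := hS.posSemidef.sqrt_mul_self
  have hCC : C * Cᴴ = 1 := emb_mul_conjTranspose hMK
  have hPCdef : PC = Cᴴ * (C * Cᴴ)⁻¹ * C := rfl
  clear_value Zd0 R0 A0 ZW1 Shalf PC C Et
  have hShalfPD : Shalf.PosDef := by
    refine .of_dotProduct_mulVec_pos hSqrtPsd.1 fun x hx => lt_of_le_of_ne (hSqrtPsd.dotProduct_mulVec_nonneg x) fun h => ?_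
    have h0 : Shalf *ᵥ x = 0 := (hSqrtPsd.dotProduct_mulVec_zero_iff x).mp h.symm
    have h1 : Sc *ᵥ x = 0 := by rw [← hSS, ← mulVec_mulVec, h0, mulVec_zero]
    have h2 := hS.dotProduct_mulVec_pos hx
    rw [h1, dotProduct_zero] at h2
    exact lt_irrefl _ h2
  have hSH : Shalfᴴ = Shalf := hSqrtPsd.1
  have hSdet : IsUnit Shalf.det := (Matrix.isUnit_iff_isUnit_det _).mp hShalfPD.isUnit
  have hSinvS : Shalf⁻¹ * Shalf = 1 := nonsing_inv_mul _ hSdet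
  have hSSinv : Shalf * Shalf⁻¹ = 1 := mul_nonsing_inv _ hSdet
  -- PC facts
  have hPC : PC = Cᴴ * C := by rw [hPCdef, hCC, inv_one, Matrix.mul_one]
  have hPCH : PCᴴ = PC := by rw [hPC, conjTranspose_mul, conjTranspose_conjTranspose]
  have hPC2 : PC * PC = PC := by
    rw [hPC, Matrix.mul_assoc, ← Matrix.mul_assoc C Cᴴ C, hCC, Matrix.one_mul]
  -- A0 full column rank
  have hA0ker : ∀ x : Fin t → ℂ, A0 *ᵥ x = 0 → x = 0 := by
    intro x hx0
    have h1 : Shalf *ᵥ (A0 *ᵥ x) = 0 := by rw [hx0, mulVec_zero]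
    rw [mulVec_mulVec] at h1
    have h2 : Shalf * A0 = Et := by
      rw [hA0def, ← Matrix.mul_assoc, hSSinv, Matrix.one_mul]
    rw [h2, hEtdef] at h1
    exact emb_mulVec_eq_zero htN h1
  have hGpd : (A0ᴴ * A0).PosDef := by
    refine .of_dotProduct_mulVec_pos (Matrix.isHermitian_conjTranspose_mul_self _) fun x hx => ?_
    have h1 : (A0ᴴ * A0) *ᵥ x = A0ᴴ *ᵥ (A0 *ᵥ x) := by rw [mulVec_mulVec]
    rw [h1, dotProduct_mulVec, ← star_mulVec]
    exact Matrix.dotProduct_star_self_pos_iff.mpr fun h => hx (hA0ker x h)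
  have hGdet : IsUnit (A0ᴴ * A0).det := (Matrix.isUnit_iff_isUnit_det _).mp hGpd.isUnit
  have hGinv1 : (A0ᴴ * A0)⁻¹ * (A0ᴴ * A0) = 1 := nonsing_inv_mul _ hGdet
  have hGH : (A0ᴴ * A0)ᴴ = A0ᴴ * A0 := Matrix.isHermitian_conjTranspose_mul_self _
  -- projector facts
  have hPP : proj A0 * proj A0 = proj A0 := by
    show A0 * (A0ᴴ * A0)⁻¹ * A0ᴴ * (A0 * (A0ᴴ * A0)⁻¹ * A0ᴴ) = A0 * (A0ᴴ * A0)⁻¹ * A0ᴴ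
    calc A0 * (A0ᴴ * A0)⁻¹ * A0ᴴ * (A0 * (A0ᴴ * A0)⁻¹ * A0ᴴ)
        = A0 * ((A0ᴴ * A0)⁻¹ * (A0ᴴ * A0) * ((A0ᴴ * A0)⁻¹ * A0ᴴ)) := by
          simp only [Matrix.mul_assoc]
      _ = A0 * (A0ᴴ * A0)⁻¹ * A0ᴴ := by
          rw [hGinv1, Matrix.one_mul, Matrix.mul_assoc]
  have hPH : (proj A0)ᴴ = proj A0 := by
    show (A0 * (A0ᴴ * A0)⁻¹ * A0ᴴ)ᴴ = A0 * (A0ᴴ * A0)⁻¹ * A0ᴴ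
    rw [conjTranspose_mul, conjTranspose_mul, conjTranspose_conjTranspose,
      conjTranspose_nonsing_inv, hGH]
    simp only [Matrix.mul_assoc]
  have hQQ : projPerp A0 * projPerp A0 = projPerp A0 := by
    simp only [projPerp, Matrix.sub_mul, Matrix.mul_sub, Matrix.one_mul, Matrix.mul_one, hPP]
    abel
  have hQH : (projPerp A0)ᴴ = projPerp A0 := by
    simp only [projPerp, conjTranspose_sub, conjTranspose_one, hPH]
  set Q := projPerp A0 with hQdef
  set B : Matrix (Fin N) (Fin N) ℂ := 1 + Q * ZW1 * PC * ZW1ᴴ * Q with hBdef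
  have hBpd : B.PosDef := by
    have hY : Q * ZW1 * PC * ZW1ᴴ * Q = (Q * ZW1 * PC) * (Q * ZW1 * PC)ᴴ := by
      simp only [conjTranspose_mul, hPCH, hQH, Matrix.mul_assoc]
      rw [← Matrix.mul_assoc PC PC, hPC2]
    rw [hBdef, hY]
    exact Matrix.PosDef.one.add_posSemidef (posSemidef_self_mul_conjTranspose _)
  have hBdet : IsUnit B.det := (Matrix.isUnit_iff_isUnit_det _).mp hBpd.isUnit
  have hBinvB : B⁻¹ * B = 1 := nonsing_inv_mul _ hBdet
  have hBBinv : B * B⁻¹ = 1 := mul_nonsing_inv _ hBdet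
  have hBQ : B * Q = Q * B := by
    rw [hBdef, Matrix.add_mul, Matrix.mul_add, Matrix.one_mul, Matrix.mul_one]
    congr 1
    simp only [← Matrix.mul_assoc]
    rw [Matrix.mul_assoc (Q * ZW1 * PC * ZW1ᴴ) Q Q, hQQ]
  have hQBinv : Q * B⁻¹ = B⁻¹ * Q := by
    have h1 : B⁻¹ * (B * Q) * B⁻¹ = B⁻¹ * (Q * B) * B⁻¹ := by rw [hBQ]
    rw [← Matrix.mul_assoc B⁻¹ B Q, hBinvB, Matrix.one_mul] at h1
    rw [Matrix.mul_assoc B⁻¹ (Q * B) B⁻¹, Matrix.mul_assoc Q B B⁻¹, hBBinv,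
      Matrix.mul_one] at h1
    exact h1
  -- R0 decomposition
  have hSBS : Shalf * B * Shalf = Sc + Shalf * Q * ZW1 * PC * ZW1ᴴ * Q * Shalf := by
    rw [hBdef, Matrix.mul_add, Matrix.add_mul, Matrix.mul_one, hSS]
    simp only [Matrix.mul_assoc]
  have hR0eq : R0 = (K : ℂ)⁻¹ • (Shalf * B * Shalf) := by
    rw [hR0def, hSBS]
  have hKpos : (0:ℝ) < ((K:ℝ))⁻¹ := inv_pos.mpr (Nat.cast_pos.mpr hK)
  have hKcast : ((((K:ℝ))⁻¹ : ℝ) : ℂ) = (K:ℂ)⁻¹ := by push_cast; ring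
  have hR0pd : R0.PosDef := by
    rw [hR0eq, ← hKcast]
    exact posDef_ofReal_smul (posDef_conj_herm hBpd hSH hSdet) hKpos
  refine ⟨hR0pd, ?_⟩
  -- inverse of R0
  have hKne : (K:ℂ) ≠ 0 := Nat.cast_ne_zero.mpr hK.ne'
  have hR0inv : R0⁻¹ = (K:ℂ) • (Shalf⁻¹ * B⁻¹ * Shalf⁻¹) := by
    apply Matrix.inv_eq_right_inv
    rw [hR0eq, Matrix.smul_mul, Matrix.mul_smul, smul_smul, inv_mul_cancel₀ hKne]
    simp only [Matrix.mul_assoc]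
    rw [← Matrix.mul_assoc Shalf Shalf⁻¹ (B⁻¹ * Shalf⁻¹), hSSinv, Matrix.one_mul,
      ← Matrix.mul_assoc B B⁻¹ Shalf⁻¹, hBBinv, Matrix.one_mul, hSSinv, one_smul]
  -- Zd0 * PC
  have hZd0PC : Zd0 * PC = Shalf * Q * Shalf⁻¹ * Z * PC := by
    rw [hZd0def, hQdef, projPerp]
    simp only [Matrix.mul_sub, Matrix.sub_mul, Matrix.mul_one, Matrix.one_mul]
    congr 1
    · rw [hSSinv, Matrix.one_mul]
    · rw [Matrix.mul_assoc (Shalf * proj A0 * Shalf⁻¹ * Z) PC PC, hPC2]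
  -- final identity
  rw [Matrix.mul_assoc R0⁻¹ Zd0 PC, hZd0PC, hR0inv]
  simp only [Matrix.smul_mul, Matrix.mul_smul]
  congr 1
  simp only [Matrix.mul_assoc]
  rw [← Matrix.mul_assoc Shalf⁻¹ Shalf, hSinvS, Matrix.one_mul,
    ← Matrix.mul_assoc Shalf Shalf⁻¹, hSSinv, Matrix.one_mul,
    ← Matrix.mul_assoc B⁻¹ Q, ← hQBinv, Matrix.mul_assoc]
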